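/- arXiv:1908.05570 — 3 statements merged into one kernel-verified Lean document; each statement's English description precedes it below -/
import Mathlib

section
/- Let P_d(W) = 1/(λW) + ℓ/W − e^{-λ(W−ℓ)}/(λW) for W ≥ ℓ with λ > 0, ℓ > 0. Then P_d is strictly decreasing in W on [ℓ, ∞) and P_d(W) → 0 as W → ∞. -/
open Filter

lemma key_ineq (c x : ℝ) (hc : 1 ≤ c) (hx : 0 < x) :
    Real.exp (-x) * (x + c) < c := by
  rw [Real.exp_neg, inv_mul_lt_iff₀ (Real.exp_pos x)]
  have h1 : x + 1 < Real.exp x := Real.add_one_lt_exp hx.ne'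
  have h2 : x ≤ c * x := le_mul_of_one_le_left hx.le hc
  have hcpos : 0 < c := lt_of_lt_of_le one_pos hc
  nlinarith [mul_lt_mul_of_pos_left h1 hcpos]

/-- `P_d(W) = 1/(lam W) + ℓ/W − e^{−lam(W−ℓ)}/(lam W)` is strictly decreasing
on `[ℓ, ∞)` and tends to `0` as `W → ∞`. -/
theorem detection_probability_strictAnti_and_tendsto_zero
    (lam ℓ : ℝ) (hlam : 0 < lam) (hℓ : 0 < ℓ) :
    StrictAntiOn
      (fun W : ℝ => 1 / (lam * W) + ℓ / W - Real.exp (-lam * (W - ℓ)) / (lam * W))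
      (Set.Ici ℓ) ∧
    Tendsto
      (fun W : ℝ => 1 / (lam * W) + ℓ / W - Real.exp (-lam * (W - ℓ)) / (lam * W))
      atTop (nhds 0) := by
  set f : ℝ → ℝ := fun W : ℝ =>
    1 / (lam * W) + ℓ / W - Real.exp (-lam * (W - ℓ)) / (lam * W) with hf
  have hder : ∀ W : ℝ, 0 < W → HasDerivAt f
      ((0 * (lam * W) - 1 * (lam * 1)) / (lam * W) ^ 2 + (0 * W - ℓ * 1) / W ^ 2 -
        (Real.exp (-lam * (W - ℓ)) * (-lam * 1) * (lam * W) -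
          Real.exp (-lam * (W - ℓ)) * (lam * 1)) / (lam * W) ^ 2) W := by
    intro W hW
    have hW0 : W ≠ 0 := hW.ne'
    have hlW : lam * W ≠ 0 := by positivity
    have h1 : HasDerivAt (fun W : ℝ => lam * W) (lam * 1) W :=
      (hasDerivAt_id W).const_mul lam
    have h2 : HasDerivAt (fun W : ℝ => 1 / (lam * W))
        ((0 * (lam * W) - 1 * (lam * 1)) / (lam * W) ^ 2) W :=
      (hasDerivAt_const W (1 : ℝ)).div h1 hlW
    have h3 : HasDerivAt (fun W : ℝ => ℓ / W) ((0 * W - ℓ * 1) / W ^ 2) W :=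
      (hasDerivAt_const W ℓ).div (hasDerivAt_id W) hW0
    have h4 : HasDerivAt (fun W : ℝ => -lam * (W - ℓ)) (-lam * 1) W :=
      ((hasDerivAt_id W).sub_const ℓ).const_mul (-lam)
    have h5 : HasDerivAt (fun W : ℝ => Real.exp (-lam * (W - ℓ)))
        (Real.exp (-lam * (W - ℓ)) * (-lam * 1)) W := h4.exp
    exact (h2.add h3).sub (h5.div h1 hlW)
  have hderneg : ∀ W : ℝ, ℓ < W → deriv f W < 0 := by
    intro W hW
    have hW0 : 0 < W := hℓ.trans hW
    have hd := (hder W hW0).deriv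
    rw [hd]
    have hx : 0 < lam * (W - ℓ) := by
      have := sub_pos.mpr hW; positivity
    have hc : (1 : ℝ) ≤ 1 + lam * ℓ := by nlinarith
    have hkey := key_ineq (1 + lam * ℓ) (lam * (W - ℓ)) hc hx
    have hrw : -lam * (W - ℓ) = -(lam * (W - ℓ)) := by ring
    rw [hrw]
    have hE : (0:ℝ) < Real.exp (-(lam * (W - ℓ))) := Real.exp_pos _
    have hsum : lam * (W - ℓ) + (1 + lam * ℓ) = lam * W + 1 := by ring
    rw [hsum] at hkey
    have heq : (0 * (lam * W) - 1 * (lam * 1)) / (lam * W) ^ 2 + (0 * W - ℓ * 1) / W ^ 2 -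
        (Real.exp (-(lam * (W - ℓ))) * (-lam * 1) * (lam * W) -
          Real.exp (-(lam * (W - ℓ))) * (lam * 1)) / (lam * W) ^ 2
        = (Real.exp (-(lam * (W - ℓ))) * (lam * W + 1) - (1 + lam * ℓ)) / (lam * W ^ 2) := by
      field_simp
      ring
    rw [heq]
    apply div_neg_of_neg_of_pos _ (by positivity)
    linarith
  constructor
  · apply strictAntiOn_of_deriv_neg (convex_Ici ℓ)
    · intro x hx
      have hx0 : 0 < x := lt_of_lt_of_le hℓ hx
      exact ((hder x hx0).continuousAt).continuousWithinAt
    · intro x hx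
      rw [interior_Ici] at hx
      exact hderneg x hx
  · have hmul : Tendsto (fun W : ℝ => lam * W) atTop atTop :=
      tendsto_id.const_mul_atTop hlam
    have h1 : Tendsto (fun W : ℝ => 1 / (lam * W)) atTop (nhds 0) :=
      tendsto_const_nhds.div_atTop hmul
    have h2 : Tendsto (fun W : ℝ => ℓ / W) atTop (nhds 0) :=
      tendsto_const_nhds.div_atTop tendsto_id
    have h3 : Tendsto (fun W : ℝ => -lam * (W - ℓ)) atTop atBot := by
      apply Tendsto.const_mul_atTop_of_neg (neg_neg_iff_pos.mpr hlam)
      exact tendsto_atTop_add_const_right atTop (-ℓ) tendsto_id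
    have h4 : Tendsto (fun W : ℝ => Real.exp (-lam * (W - ℓ))) atTop (nhds 0) :=
      Real.tendsto_exp_atBot.comp h3
    have h5 : Tendsto (fun W : ℝ => Real.exp (-lam * (W - ℓ)) / (lam * W)) atTop (nhds 0) :=
      h4.div_atTop hmul
    have h0 : ((0:ℝ) + 0) - 0 = 0 := by norm_num
    exact h0 ▸ ((h1.add h2).sub h5)
end

section
/- Define A_n = H_n − H_{r−n} − H_{n−k} for k ≤ n ≤ r−1 with fixed positive integers k < r. Let n* = √(k(r+1)) − 1. Then A is strictly decreasing on integers n < n* and strictly increasing on integers n > n*; hence A attains its minimum over {k, …, r−1} at ⌊n*⌋ or ⌈n*⌉ (restricted to that range). -/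
/-- The `j`-th harmonicNum number `H_j = ∑_{i=1}^j 1/i` (with `H_0 = 0`). -/
noncomputable def harmonicNum (j : ℕ) : ℝ := ∑ i ∈ Finset.range j, (1 : ℝ) / (i + 1)

lemma A_step_eq (r k : ℕ) (n : ℕ) (h1 : k ≤ n) (h2 : n + 1 ≤ r - 1) (hr : 1 ≤ r)
    (A : ℕ → ℝ)
    (hA : ∀ n, A n = harmonicNum n - harmonicNum (r - n) - harmonicNum (n - k)) :
    A (n+1) - A n = (((n:ℝ)+1)^2 - (k:ℝ)*((r:ℝ)+1)) /
      (((n:ℝ)+1) * ((r:ℝ)-(n:ℝ)) * ((n:ℝ)-(k:ℝ)+1)) := by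
  have hH : ∀ j : ℕ, harmonicNum (j+1) = harmonicNum j + 1/((j:ℝ)+1) := by
    intro j; simp [harmonicNum, Finset.sum_range_succ]
  have e1 : n + 1 - k = (n - k) + 1 := by omega
  have e2 : r - n = (r - (n+1)) + 1 := by omega
  rw [hA, hA, e1, e2]
  simp only [hH]
  have c1 : ((n - k : ℕ) : ℝ) = (n:ℝ) - k := by
    have : k ≤ n := h1
    push_cast [this]; ring
  have c2 : ((r - (n+1) : ℕ) : ℝ) = (r:ℝ) - (n:ℝ) - 1 := by
    have : n + 1 ≤ r := by omega
    push_cast [this]; ring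
  rw [c1, c2]
  have h4 : (n:ℝ) < r := by exact_mod_cast (show n < r by omega)
  have h5 : (k:ℝ) ≤ n := by exact_mod_cast h1
  have h6 : (0:ℝ) ≤ n := Nat.cast_nonneg n
  have p1 : ((n:ℝ)+1) ≠ 0 := by positivity
  have p2 : ((r:ℝ) - (n:ℝ)) ≠ 0 := ne_of_gt (by linarith)
  have p3 : ((n:ℝ)-(k:ℝ)+1) ≠ 0 := ne_of_gt (by linarith)
  rw [show (r:ℝ) - (n:ℝ) - 1 + 1 = (r:ℝ) - (n:ℝ) by ring]
  field_simp
  ring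

lemma A_den_pos (r k : ℕ) (n : ℕ) (h1 : k ≤ n) (h2 : n + 1 ≤ r - 1) (hr : 1 ≤ r) :
    0 < ((n:ℝ)+1) * ((r:ℝ)-(n:ℝ)) * ((n:ℝ)-(k:ℝ)+1) := by
  have h4 : (n:ℝ) < r := by exact_mod_cast (show n < r by omega)
  have h5 : (k:ℝ) ≤ n := by exact_mod_cast h1
  have h6 : (0:ℝ) ≤ n := Nat.cast_nonneg n
  apply mul_pos (mul_pos (by linarith) (by linarith)) (by linarith)

/-- With `A_n = H_n − H_{r−n} − H_{n−k}` for `k ≤ n ≤ r−1` and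
`n* = √(k(r+1)) − 1`: `A` is strictly decreasing on integers `n < n*`, strictly
increasing on integers `n > n*`, and hence attains its minimum over `{k, …, r−1}` at
`⌊n*⌋` or `⌈n*⌉` (clamped to that range). -/
theorem A_unimodal_minimizer
    (r k : ℕ) (hk : 0 < k) (hkr : k < r)
    (A : ℕ → ℝ)
    (hA : ∀ n, A n = harmonicNum n - harmonicNum (r - n) - harmonicNum (n - k)) :
    (∀ n, k ≤ n → n + 1 ≤ r - 1 →
      (n : ℝ) < Real.sqrt ((k : ℝ) * ((r : ℝ) + 1)) - 1 → A (n + 1) < A n) ∧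
    (∀ n, k ≤ n → n + 1 ≤ r - 1 →
      (n : ℝ) > Real.sqrt ((k : ℝ) * ((r : ℝ) + 1)) - 1 → A n < A (n + 1)) ∧
    (∃ m ∈ Finset.Icc k (r - 1),
      (m = max k (min (r - 1) ⌊Real.sqrt ((k : ℝ) * ((r : ℝ) + 1)) - 1⌋₊) ∨
       m = max k (min (r - 1) ⌈Real.sqrt ((k : ℝ) * ((r : ℝ) + 1)) - 1⌉₊)) ∧
      ∀ n ∈ Finset.Icc k (r - 1), A m ≤ A n) := by
  have hr : 1 ≤ r := by omega
  set s : ℝ := Real.sqrt ((k : ℝ) * ((r : ℝ) + 1)) with hs_def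
  have hs_nn : (0:ℝ) ≤ s := Real.sqrt_nonneg _
  have hs_sq : s ^ 2 = (k:ℝ) * ((r:ℝ) + 1) := Real.sq_sqrt (by positivity)
  have hs1 : 1 < s := by
    have hk1 : (1:ℝ) ≤ k := by exact_mod_cast hk
    have hr3 : (2:ℝ) ≤ (r:ℝ) := by exact_mod_cast (show 2 ≤ r by omega)
    nlinarith [hs_sq, hs_nn]
  refine ⟨?_, ?_, ?_⟩
  · intro n h1 h2 h3
    have key := A_step_eq r k n h1 h2 hr A hA
    have hnum : ((n:ℝ)+1)^2 - (k:ℝ)*((r:ℝ)+1) < 0 := by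
      have h6 : (0:ℝ) ≤ n := Nat.cast_nonneg n
      nlinarith
    have : A (n+1) - A n < 0 := by
      rw [key]; exact div_neg_of_neg_of_pos hnum (A_den_pos r k n h1 h2 hr)
    linarith
  · intro n h1 h2 h3
    have key := A_step_eq r k n h1 h2 hr A hA
    have hnum : 0 < ((n:ℝ)+1)^2 - (k:ℝ)*((r:ℝ)+1) := by
      have h6 : (0:ℝ) ≤ n := Nat.cast_nonneg n
      nlinarith
    have : 0 < A (n+1) - A n := by
      rw [key]; exact div_pos hnum (A_den_pos r k n h1 h2 hr)
    linarith
  · set c : ℕ := ⌈s - 1⌉₊ with hc_def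
    have hstar_pos : (0:ℝ) < s - 1 := by linarith
    have hc_ge : s - 1 ≤ (c:ℝ) := Nat.le_ceil _
    have hc_lt : (c:ℝ) < s := by
      have := Nat.ceil_lt_add_one (le_of_lt hstar_pos)
      rw [← hc_def] at this; linarith
    set m : ℕ := max k (min (r - 1) c) with hm_def
    have hm1 : k ≤ m := le_max_left _ _
    have hm2 : m ≤ r - 1 := by omega
    -- non-strict increase to the right of m
    have step_up : ∀ j, m ≤ j → j + 1 ≤ r - 1 → A j ≤ A (j+1) := by
      intro j hj1 hj2
      have hjk : k ≤ j := le_trans hm1 hj1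
      have hjc : c ≤ j := by omega
      have key := A_step_eq r k j hjk hj2 hr A hA
      have hjcr : (c:ℝ) ≤ j := by exact_mod_cast hjc
      have hnum : 0 ≤ ((j:ℝ)+1)^2 - (k:ℝ)*((r:ℝ)+1) := by nlinarith
      have : 0 ≤ A (j+1) - A j := by
        rw [key]; exact div_nonneg hnum (le_of_lt (A_den_pos r k j hjk hj2 hr))
      linarith
    -- non-strict decrease to the left of m
    have step_down : ∀ j, k ≤ j → j + 1 ≤ m → A (j+1) ≤ A j := by
      intro j hj1 hj2
      have hj2' : j + 1 ≤ r - 1 := le_trans hj2 hm2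
      have hjc : j + 1 ≤ c := by omega
      have key := A_step_eq r k j hj1 hj2' hr A hA
      have hjcr : (j:ℝ) + 1 ≤ c := by exact_mod_cast hjc
      have hnum : ((j:ℝ)+1)^2 - (k:ℝ)*((r:ℝ)+1) ≤ 0 := by
        have h6 : (0:ℝ) ≤ j := Nat.cast_nonneg j
        nlinarith
      have : A (j+1) - A j ≤ 0 := by
        rw [key]
        exact div_nonpos_of_nonpos_of_nonneg hnum
          (le_of_lt (A_den_pos r k j hj1 hj2' hr))
      linarith
    have up_chain : ∀ n, m ≤ n → n ≤ r - 1 → A m ≤ A n := by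
      intro n
      induction n with
      | zero => intro h1 _; exact absurd h1 (by omega)
      | succ p ih =>
        intro h1 h2
        rcases Nat.lt_or_ge p m with h | h
        · have : m = p + 1 := by omega
          rw [this]
        · exact le_trans (ih h (by omega)) (step_up p h h2)
    have down_chain : ∀ t n, m - n = t → k ≤ n → n ≤ m → A m ≤ A n := by
      intro t
      induction t with
      | zero => intro n h1 _ h3; exact le_of_eq (congrArg A (by omega : m = n))
      | succ t ih =>
        intro n h1 h2 h3
        have hlt : n < m := by omega
        exact le_trans (ih (n+1) (by omega) (by omega) (by omega))
          (step_down n h2 (by omega))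
    refine ⟨m, Finset.mem_Icc.mpr ⟨hm1, hm2⟩, Or.inr rfl, ?_⟩
    intro n hn
    rw [Finset.mem_Icc] at hn
    rcases le_or_gt n m with h | h
    · exact down_chain (m - n) n rfl hn.1 h
    · exact up_chain n (le_of_lt h) hn.2
end

section
/- Suppose each chunk transmission is detected independently with probability P_d(k) = 1/(λW) + m/(kW) − e^{-λ(W−m/k)}/(λW) when W ≥ m/k (and P_d = 1 otherwise). Then for fixed n and fixed λ, m, W with W > m, the covertness probability P_c(k) = (1 − P_d(k))^{n+k} satisfies: P_d(k) is strictly decreasing in k on integers k with m/k < W. -/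
/-- With `P_d(k) = 1/(lam W) + m/(kW) − e^{−lam(W−m/k)}/(lam W)` and
`W > m`, the detection probability `P_d(k)` is strictly decreasing in the number of
chunks `k ≥ 1`. -/
theorem detection_probability_strict_decreasing_in_k
    (lam m W : ℝ) (hlam : 0 < lam) (hm : 0 < m) (hW : m < W) :
    ∀ k₁ k₂ : ℕ, 1 ≤ k₁ → k₁ < k₂ →
      1 / (lam * W) + m / ((k₂ : ℝ) * W) -
          Real.exp (-lam * (W - m / (k₂ : ℝ))) / (lam * W) <
        1 / (lam * W) + m / ((k₁ : ℝ) * W) -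
          Real.exp (-lam * (W - m / (k₁ : ℝ))) / (lam * W) := by
  intro k₁ k₂ hk1 hlt
  have hW0 : (0:ℝ) < W := lt_trans hm hW
  set g : ℝ → ℝ := fun t => t / W - Real.exp (lam * t - lam * W) / (lam * W) with hg
  have hmono : StrictMonoOn g (Set.Iic W) := by
    apply strictMonoOn_of_deriv_pos (convex_Iic W)
    · apply Continuous.continuousOn
      fun_prop
    · intro t ht
      rw [interior_Iic] at ht
      have h1 : HasDerivAt (fun t : ℝ => lam * t - lam * W) lam t := by
        simpa using ((hasDerivAt_id t).const_mul lam).sub_const (lam * W)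
      have h2 := (h1.exp).div_const (lam * W)
      have h3 := ((hasDerivAt_id t).div_const W).sub h2
      have hD : HasDerivAt g ((1 - Real.exp (lam * t - lam * W)) / W) t := by
        have e : (1 - Real.exp (lam * t - lam * W)) / W = 1 / W - Real.exp (lam * t - lam * W) * lam / (lam * W) := by
          field_simp
        rw [e]
        exact h3
      rw [hD.deriv]
      apply div_pos _ hW0
      have : Real.exp (lam * t - lam * W) < 1 := by
        rw [Real.exp_lt_one_iff]
        have : t < W := ht
        nlinarith
      linarith
  have hk1' : (0:ℝ) < (k₁ : ℝ) := by exact_mod_cast lt_of_lt_of_le one_pos hk1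
  have hk2' : (0:ℝ) < (k₂ : ℝ) := lt_trans hk1' (by exact_mod_cast hlt)
  have ht2 : m / (k₂ : ℝ) < m / (k₁ : ℝ) := by
    apply div_lt_div_of_pos_left hm hk1'
    exact_mod_cast hlt
  have ht1W : m / (k₁ : ℝ) ≤ m := by
    apply div_le_self hm.le
    exact_mod_cast hk1
  have key := hmono (Set.mem_Iic.mpr (le_of_lt (lt_of_le_of_lt (le_trans ht2.le ht1W) hW)))
      (Set.mem_Iic.mpr (le_of_lt (lt_of_le_of_lt ht1W hW))) ht2
  simp only [hg] at key
  have e2 : Real.exp (-lam * (W - m / (k₂ : ℝ))) = Real.exp (lam * (m / (k₂:ℝ)) - lam * W) := by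
    ring_nf
  have e1 : Real.exp (-lam * (W - m / (k₁ : ℝ))) = Real.exp (lam * (m / (k₁:ℝ)) - lam * W) := by
    ring_nf
  have d2 : m / ((k₂ : ℝ) * W) = (m / (k₂:ℝ)) / W := by rw [div_div]
  have d1 : m / ((k₁ : ℝ) * W) = (m / (k₁:ℝ)) / W := by rw [div_div]
  rw [e1, e2, d1, d2]
  linarith
end
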